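/- If two sequences a, b : ℤ^d → ℂ satisfy |a_k| ≤ C_a e^{-β|k|} and |b_k| ≤ C_b e^{-β|k|} for all k (where |k| = |k₁|+⋯+|k_d| is the 1-norm), then for every β' ∈ (0,β) the discrete convolution c_j = Σ_k a_{j-k} b_k satisfies |c_j| ≤ C_a C_b (coth((β-β')/2))^d e^{-β'|j|} for all j ∈ ℤ^d. -/

import Mathlib

open scoped BigOperators

theorem natAbs_neg_add_one (n : ℕ) : ((-(n + 1) : ℤ)).natAbs = n + 1 := by omega

theorem lemB {y : ℝ} (hy0 : 0 ≤ y) (hy1 : y < 1) :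
    Summable (fun m : ℤ => y ^ m.natAbs) ∧
      (∑' m : ℤ, y ^ m.natAbs) = (1 + y) / (1 - y) := by
  have key : ∀ n : ℕ, y ^ ((-(n+1) : ℤ)).natAbs = y * y ^ n := by
    intro n; rw [natAbs_neg_add_one, pow_succ, mul_comm]
  have h1 : Summable (fun n : ℕ => y ^ ((n : ℤ)).natAbs) := by
    simpa using summable_geometric_of_lt_one hy0 hy1
  have h2 : Summable (fun n : ℕ => y ^ ((-(n + 1) : ℤ)).natAbs) := by
    rw [summable_congr key]
    exact (summable_geometric_of_lt_one hy0 hy1).mul_left y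
  refine ⟨Summable.of_nat_of_neg_add_one h1 h2, ?_⟩
  rw [tsum_of_nat_of_neg_add_one (f := fun m : ℤ => y ^ m.natAbs) h1 h2]
  have e1 : (∑' n : ℕ, y ^ ((n : ℤ)).natAbs) = (1 - y)⁻¹ := by
    simpa using tsum_geometric_of_lt_one hy0 hy1
  have e2 : (∑' n : ℕ, y ^ ((-(n+1) : ℤ)).natAbs) = y * (1 - y)⁻¹ := by
    rw [tsum_congr key, tsum_mul_left, tsum_geometric_of_lt_one hy0 hy1]
  rw [e1, e2]
  have : (1 : ℝ) - y ≠ 0 := by linarith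
  field_simp

theorem lemOdd {x : ℝ} (hx0 : 0 ≤ x) (hx1 : x < 1) :
    Summable (fun m : ℤ => x ^ (2*m - 1).natAbs) ∧
      (∑' m : ℤ, x ^ (2*m - 1).natAbs) ≤ (1 + x^2) / (1 - x^2) := by
  have hy0 : (0:ℝ) ≤ x^2 := sq_nonneg x
  have hy1 : x^2 < 1 := by nlinarith
  have hgeo := summable_geometric_of_lt_one hy0 hy1
  have key1 : ∀ n : ℕ, x ^ ((2*((n:ℤ)+1) - 1 : ℤ)).natAbs = x * (x^2)^n := by
    intro n
    have : ((2*((n:ℤ)+1) - 1 : ℤ)).natAbs = 2*n + 1 := by omega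
    rw [this, pow_add, pow_mul, pow_one, mul_comm]
  have key2 : ∀ n : ℕ, x ^ ((2*(-((n:ℤ)+1)) - 1 : ℤ)).natAbs = x^3 * (x^2)^n := by
    intro n
    have : ((2*(-((n:ℤ)+1)) - 1 : ℤ)).natAbs = 2*n + 3 := by omega
    rw [this, pow_add, pow_mul, mul_comm]
  have h1' : Summable (fun n : ℕ => x ^ ((2*(((n:ℤ))+1) - 1 : ℤ)).natAbs) := by
    rw [summable_congr key1]; exact hgeo.mul_left x
  have h1 : Summable (fun n : ℕ => x ^ ((2*(n:ℤ) - 1 : ℤ)).natAbs) := by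
    refine (summable_nat_add_iff (f := fun n : ℕ => x ^ ((2*(n:ℤ) - 1 : ℤ)).natAbs) 1).mp
      (h1'.congr fun n => ?_)
    push_cast
    ring_nf
  have h2 : Summable (fun n : ℕ => x ^ ((2*(-((n:ℤ)+1)) - 1 : ℤ)).natAbs) := by
    rw [summable_congr key2]; exact hgeo.mul_left (x^3)
  have h2' : Summable (fun n : ℕ => x ^ ((2*(-((n:ℤ)+1)) - 1 : ℤ)).natAbs) := h2
  have hsum : Summable (fun m : ℤ => x ^ (2*m - 1).natAbs) := by
    refine Summable.of_nat_of_neg_add_one ?_ ?_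
    · exact h1
    · refine h2.congr fun n => ?_
      push_cast
      ring_nf
  refine ⟨hsum, ?_⟩
  have hx2 : (0:ℝ) < 1 - x^2 := by linarith
  have e0 : (∑' m : ℤ, x ^ (2*m - 1).natAbs)
      = (∑' n : ℕ, x ^ ((2*(n:ℤ) - 1 : ℤ)).natAbs)
        + ∑' n : ℕ, x ^ ((2*(-((n:ℤ)+1)) - 1 : ℤ)).natAbs := by
    rw [tsum_of_nat_of_neg_add_one (f := fun m : ℤ => x ^ (2*m - 1).natAbs) h1
      (h2.congr fun n => by push_cast; ring_nf)]
  have e1 : (∑' n : ℕ, x ^ ((2*(n:ℤ) - 1 : ℤ)).natAbs)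
      = x + x * (1 - x^2)⁻¹ := by
    rw [Summable.tsum_eq_zero_add h1]
    have h00 : x ^ ((2*((0:ℕ):ℤ) - 1 : ℤ)).natAbs = x := by norm_num
    have : ∀ n : ℕ, x ^ ((2*(((n+1 : ℕ)):ℤ) - 1 : ℤ)).natAbs = x * (x^2)^n := by
      intro n
      have := key1 n
      rw [← this]
      push_cast
      ring_nf
    rw [h00, tsum_congr this, tsum_mul_left, tsum_geometric_of_lt_one hy0 hy1]
  have e2 : (∑' n : ℕ, x ^ ((2*(-((n:ℤ)+1)) - 1 : ℤ)).natAbs)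
      = x^3 * (1 - x^2)⁻¹ := by
    rw [tsum_congr key2, tsum_mul_left, tsum_geometric_of_lt_one hy0 hy1]
  rw [e0, e1, e2]
  rw [div_eq_mul_inv]
  have h2x : x + x * (1 - x^2)⁻¹ + x^3 * (1 - x^2)⁻¹ = (2*x) * (1-x^2)⁻¹ := by
    field_simp
    ring
  rw [h2x]
  have : 2*x ≤ 1 + x^2 := by nlinarith
  exact mul_le_mul_of_nonneg_right this (by positivity)

theorem lemCoord {x : ℝ} (hx0 : 0 ≤ x) (hx1 : x < 1) (n : ℤ) :
    Summable (fun m : ℤ => x ^ (2*m - n).natAbs) ∧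
      (∑' m : ℤ, x ^ (2*m - n).natAbs) ≤ (1 + x^2) / (1 - x^2) := by
  have hy0 : (0:ℝ) ≤ x^2 := sq_nonneg x
  have hy1 : x^2 < 1 := by nlinarith
  have key : ∀ m : ℤ, (2*(m + n/2) - n).natAbs = (2*m - n % 2).natAbs := by
    intro m; omega
  have hiff : Summable (fun m : ℤ => x ^ (2*m - n).natAbs) ↔
      Summable (fun m : ℤ => x ^ (2*m - n % 2).natAbs) := by
    rw [← (Equiv.addRight (n/2)).summable_iff
      (f := fun m : ℤ => x ^ (2*m - n).natAbs)]
    exact summable_congr fun m => by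
      simp only [Function.comp_apply, Equiv.coe_addRight]; rw [key]
  have heq : (∑' m : ℤ, x ^ (2*m - n).natAbs) =
      ∑' m : ℤ, x ^ (2*m - n % 2).natAbs := by
    rw [← (Equiv.addRight (n/2)).tsum_eq (f := fun m : ℤ => x ^ (2*m - n).natAbs)]
    exact tsum_congr fun m => by simp only [Equiv.coe_addRight]; rw [key]
  rw [hiff, heq]
  rcases Int.emod_two_eq n with h | h <;> rw [h]
  · have keve : ∀ m : ℤ, x ^ (2*m - 0).natAbs = (x^2) ^ m.natAbs := by
      intro m
      have : (2*m - 0).natAbs = 2 * m.natAbs := by omega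
      rw [this, pow_mul]
    simp only [keve]
    obtain ⟨hs, he⟩ := lemB hy0 hy1
    exact ⟨hs, le_of_eq he⟩
  · exact lemOdd hx0 hx1


noncomputable def piProd {d : ℕ} (g : Fin d → ℤ → ℝ) (k : Fin d → ℤ) : ℝ :=
  ∏ i, g i (k i)

theorem lemMul {α : Type} (f : ℤ → ℝ) (F : α → ℝ) (hf : Summable f) (hF : Summable F)
    (hf0 : ∀ m, 0 ≤ f m) (hF0 : ∀ k, 0 ≤ F k) :
    Summable (fun p : ℤ × α => f p.1 * F p.2) :=
  Summable.mul_of_nonneg hf hF (fun m => hf0 m) (fun k => hF0 k)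

theorem lemC : ∀ (d : ℕ) (g : Fin d → ℤ → ℝ), (∀ i m, 0 ≤ g i m) →
    (∀ i, Summable (g i)) →
    Summable (piProd g) ∧ (∑' k : Fin d → ℤ, piProd g k) = ∏ i, ∑' m, g i m := by
  intro d
  induction d with
  | zero =>
    intro g _ _
    have h1 : piProd g = fun _ => 1 := by
      funext k; simp [piProd]
    rw [h1]
    have hs : HasSum (fun _ : Fin 0 → ℤ => (1:ℝ)) 1 := by
      have := hasSum_single (f := fun _ : Fin 0 → ℤ => (1:ℝ)) default
        (fun b hb => (hb (Subsingleton.elim b default)).elim)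
      simpa using this
    refine ⟨hs.summable, ?_⟩
    rw [hs.tsum_eq]
    simp
  | succ d ih =>
    intro g hg0 hgs
    obtain ⟨ihs, ihe⟩ := ih (fun i => g i.succ) (fun i m => hg0 i.succ m)
      (fun i => hgs i.succ)
    have hmul : Summable (fun p : ℤ × (Fin d → ℤ) =>
        g 0 p.1 * piProd (fun i => g i.succ) p.2) :=
      lemMul (g 0) (piProd (fun i => g i.succ)) (hgs 0) ihs
        (fun m => hg0 0 m)
        (fun k => Finset.prod_nonneg fun i _ => hg0 i.succ (k i))
    have key : ∀ k : Fin (d+1) → ℤ, piProd g k =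
        g 0 (((Fin.consEquiv (fun _ : Fin (d+1) => ℤ)).symm k).1) *
          piProd (fun i => g i.succ) (((Fin.consEquiv (fun _ : Fin (d+1) => ℤ)).symm k).2) := by
      intro k
      show (∏ i, g i (k i)) = g 0 (k 0) * ∏ i : Fin d, g i.succ (k i.succ)
      rw [Fin.prod_univ_succ]
    have hsum : Summable (piProd g) := by
      rw [summable_congr (fun k => key k)]
      exact (((Fin.consEquiv (fun _ : Fin (d+1) => ℤ)).symm).summable_iff
        (f := fun p : ℤ × (Fin d → ℤ) =>
          g 0 p.1 * piProd (fun i => g i.succ) p.2)).mpr hmul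
    refine ⟨hsum, ?_⟩
    rw [tsum_congr key]
    have e1 : (∑' k : Fin (d+1) → ℤ,
        g 0 (((Fin.consEquiv (fun _ : Fin (d+1) => ℤ)).symm k).1) *
          piProd (fun i => g i.succ) (((Fin.consEquiv (fun _ : Fin (d+1) => ℤ)).symm k).2))
        = ∑' p : ℤ × (Fin d → ℤ), g 0 p.1 * piProd (fun i => g i.succ) p.2 :=
      ((Fin.consEquiv (fun _ : Fin (d+1) => ℤ)).symm).tsum_eq
        (f := fun p : ℤ × (Fin d → ℤ) => g 0 p.1 * piProd (fun i => g i.succ) p.2)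
    rw [e1, ← (hgs 0).tsum_mul_tsum ihs hmul, Fin.prod_univ_succ, ihe]

/-- 1-norm of a multi-integer, as a real number. -/
noncomputable def oneNormZ {d : ℕ} (k : Fin d → ℤ) : ℝ :=
  ∑ i, |(k i : ℝ)|

theorem stmt_1 {d : ℕ} (β β' Ca Cb : ℝ) (hβ' : 0 < β') (hβ : β' < β)
    (a b : (Fin d → ℤ) → ℂ)
    (ha : ∀ k, ‖a k‖ ≤ Ca * Real.exp (-β * oneNormZ k))
    (hb : ∀ k, ‖b k‖ ≤ Cb * Real.exp (-β * oneNormZ k)) :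
    ∀ j : Fin d → ℤ,
      ‖∑' k : Fin d → ℤ, a (j - k) * b k‖ ≤
        Ca * Cb * (Real.cosh ((β - β') / 2) / Real.sinh ((β - β') / 2)) ^ d
          * Real.exp (-β' * oneNormZ j) := by
  intro j
  set c : ℝ := (β - β') / 2 with hc_def
  have hc : 0 < c := by simp only [hc_def]; linarith
  set x : ℝ := Real.exp (-c) with hx_def
  have hx0 : 0 < x := Real.exp_pos _
  have hx1 : x < 1 := Real.exp_lt_one_iff.mpr (by linarith)
  have hx2 : (0:ℝ) < 1 - x^2 := by nlinarith
  set K : ℝ := (1 + x^2) / (1 - x^2) with hK_def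
  have hK0 : 0 ≤ K := by positivity
  -- the coordinate weight functions
  set g : Fin d → ℤ → ℝ := fun i m => x ^ (2*m - j i).natAbs with hg_def
  have hg0 : ∀ i m, 0 ≤ g i m := fun i m => pow_nonneg hx0.le _
  have hgs : ∀ i, Summable (g i) := fun i => (lemCoord hx0.le hx1 (j i)).1
  have hgt : ∀ i, (∑' m : ℤ, g i m) ≤ K := fun i => (lemCoord hx0.le hx1 (j i)).2
  obtain ⟨hPs, hPe⟩ := lemC d g hg0 hgs
  -- nonnegativity of Ca, Cb
  have hCa : 0 ≤ Ca := by
    have h1 := (norm_nonneg (a 0)).trans (ha 0)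
    nlinarith [Real.exp_pos (-β * oneNormZ (0 : Fin d → ℤ))]
  have hCb : 0 ≤ Cb := by
    have h1 := (norm_nonneg (b 0)).trans (hb 0)
    nlinarith [Real.exp_pos (-β * oneNormZ (0 : Fin d → ℤ))]
  -- pointwise bound
  have key : ∀ k : Fin d → ℤ, ‖a (j - k) * b k‖ ≤
      Ca * Cb * Real.exp (-β' * oneNormZ j) * piProd g k := by
    intro k
    have hexp : piProd g k
        = Real.exp (-c * ∑ i, |((2 * k i - j i : ℤ) : ℝ)|) := by
      have : ∀ i : Fin d, g i (k i)
          = Real.exp (-c * |((2 * k i - j i : ℤ) : ℝ)|) := by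
        intro i
        simp only [hg_def]
        rw [show |((2 * k i - j i : ℤ) : ℝ)| = (((2 * k i - j i).natAbs : ℕ) : ℝ) by
          rw [Nat.cast_natAbs]; push_cast; ring_nf]
        rw [hx_def, ← Real.exp_nat_mul]
        congr 1
        ring
      rw [piProd, Finset.prod_congr rfl (fun i _ => this i), ← Real.exp_sum]
      rw [← Finset.mul_sum]
    have habs : ‖a (j - k) * b k‖ ≤
        Ca * Cb * Real.exp (-β * (oneNormZ (j - k) + oneNormZ k)) := by
      rw [norm_mul]
      calc ‖a (j - k)‖ * ‖b k‖
          ≤ (Ca * Real.exp (-β * oneNormZ (j - k))) * (Cb * Real.exp (-β * oneNormZ k)) :=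
            mul_le_mul (ha _) (hb _) (norm_nonneg _)
              (by positivity)
        _ = Ca * Cb * Real.exp (-β * (oneNormZ (j - k) + oneNormZ k)) := by
            rw [mul_add, Real.exp_add]; ring
    refine habs.trans ?_
    rw [hexp]
    have hsum : β' * oneNormZ j + c * (∑ i, |((2 * k i - j i : ℤ) : ℝ)|)
        ≤ β * (oneNormZ (j - k) + oneNormZ k) := by
      have coord : ∀ i : Fin d, β' * |(j i : ℝ)| + c * |((2 * k i - j i : ℤ) : ℝ)|
          ≤ β * (|(((j - k) i : ℤ) : ℝ)| + |(k i : ℝ)|) := by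
        intro i
        have e1 : (((j - k) i : ℤ) : ℝ) = (j i : ℝ) - (k i : ℝ) := by
          simp [Pi.sub_apply]
        have e2 : ((2 * k i - j i : ℤ) : ℝ) = 2 * (k i : ℝ) - (j i : ℝ) := by
          push_cast; ring
        rw [e1, e2]
        set A := (j i : ℝ)
        set B := (k i : ℝ)
        have t1 : |A| ≤ |A - B| + |B| := by
          calc |A| = |(A - B) + B| := by ring_nf
            _ ≤ |A - B| + |B| := abs_add_le _ _
        have t2 : |2*B - A| ≤ |A - B| + |B| := by
          calc |2*B - A| = |B - (A - B)| := by ring_nf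
            _ ≤ |B| + |A - B| := abs_sub _ _
            _ = |A - B| + |B| := by ring
        have hcb : β' + c ≤ β := by rw [hc_def]; linarith
        nlinarith [abs_nonneg (A - B), abs_nonneg B, abs_nonneg A,
          abs_nonneg (2*B - A)]
      have := Finset.sum_le_sum (fun i (_ : i ∈ Finset.univ) => coord i)
      simp only [Finset.sum_add_distrib, ← Finset.mul_sum] at this
      simpa [oneNormZ, Finset.mul_sum, Finset.sum_add_distrib, mul_add] using this
    have hmono : Real.exp (-β * (oneNormZ (j - k) + oneNormZ k))
        ≤ Real.exp (-β' * oneNormZ j + -c * ∑ i, |((2 * k i - j i : ℤ) : ℝ)|) := by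
      apply Real.exp_le_exp.mpr
      nlinarith [hsum]
    calc Ca * Cb * Real.exp (-β * (oneNormZ (j - k) + oneNormZ k))
        ≤ Ca * Cb * Real.exp (-β' * oneNormZ j + -c * ∑ i, |((2 * k i - j i : ℤ) : ℝ)|) := by
          apply mul_le_mul_of_nonneg_left hmono (by positivity)
      _ = Ca * Cb * Real.exp (-β' * oneNormZ j) * Real.exp (-c * ∑ i, |((2 * k i - j i : ℤ) : ℝ)|) := by
          rw [Real.exp_add]; ring
  -- assemble
  have hG : Summable (fun k : Fin d → ℤ =>
      Ca * Cb * Real.exp (-β' * oneNormZ j) * piProd g k) := hPs.mul_left _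
  have hnorm : ∀ k : Fin d → ℤ, ‖a (j - k) * b k‖ ≤
      Ca * Cb * Real.exp (-β' * oneNormZ j) * piProd g k := fun k => by
    exact key k
  have hA' : Summable (fun k : Fin d → ℤ => ‖a (j - k) * b k‖) :=
    Summable.of_nonneg_of_le (fun k => norm_nonneg _) hnorm hG
  have habs_tsum : ‖∑' k : Fin d → ℤ, a (j - k) * b k‖ ≤
      ∑' k : Fin d → ℤ, ‖a (j - k) * b k‖ := by
    exact norm_tsum_le_tsum_norm hA'
  refine habs_tsum.trans ?_
  refine (Summable.tsum_le_tsum hnorm hA' hG).trans ?_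
  rw [tsum_mul_left, hPe]
  have hprod : (∏ i, ∑' m : ℤ, g i m) ≤ K ^ d := by
    calc (∏ i, ∑' m : ℤ, g i m) ≤ ∏ _i : Fin d, K :=
          Finset.prod_le_prod (fun i _ => tsum_nonneg (fun m => hg0 i m))
            (fun i _ => hgt i)
      _ = K ^ d := by simp
  have hKcoth : Real.cosh c / Real.sinh c = K := by
    have h1 : Real.exp (-c) < Real.exp c := Real.exp_lt_exp.mpr (by linarith)
    have e1 : Real.exp c ≠ 0 := (Real.exp_pos c).ne'
    have e2 : Real.exp c - Real.exp (-c) ≠ 0 := sub_ne_zero_of_ne (ne_of_gt h1)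
    have e3 : (1:ℝ) - x^2 ≠ 0 := hx2.ne'
    rw [Real.cosh_eq, Real.sinh_eq, hK_def, hx_def, Real.exp_neg] at *
    field_simp
  rw [hKcoth]
  calc Ca * Cb * Real.exp (-β' * oneNormZ j) * (∏ i, ∑' m : ℤ, g i m)
      ≤ Ca * Cb * Real.exp (-β' * oneNormZ j) * K ^ d :=
        mul_le_mul_of_nonneg_left hprod (by positivity)
    _ = Ca * Cb * K ^ d * Real.exp (-β' * oneNormZ j) := by ring
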